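/- Let M, X be metric spaces and {F_K : K ∈ K(M)} a monotone family of compact subsets of X. Then for any compact K ⊆ M and any open V ⊆ X with ⋂_{n≥1} ⋃{F_L : K ⊆ L ⊆ U_n(K)} ⊆ V, there exists an open set U ⊇ K in M such that F_L ⊆ V for every compact L ⊆ U. -/

import Mathlib

open Metric Filter Set Topology

/-- The union of `K` with compact sets `L m` (for `m ≥ n`) shrinking towards `K`
is compact. -/
lemma regularization_aux_union_compact {M : Type*} [MetricSpace M] (K : Set M)
    (hK : IsCompact K) (hKne : K.Nonempty)
    (L : ℕ → Set M) (hLc : ∀ m, IsCompact (L m))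
    (hLd : ∀ m, ∀ t ∈ L m, Metric.infDist t K < 1 / (m + 1 : ℝ)) (n : ℕ) :
    IsCompact (K ∪ ⋃ m ∈ {m : ℕ | n ≤ m}, L m) := by
  apply IsSeqCompact.isCompact
  intro x hx
  have hf : ∀ j, ∃ m, n ≤ m ∧ (x j ∈ K ∨ x j ∈ L m) := by
    intro j
    rcases hx j with h | h
    · exact ⟨n, le_refl n, Or.inl h⟩
    · simp only [mem_iUnion, Set.mem_setOf_eq, exists_prop] at h
      obtain ⟨m, hm, hmem⟩ := h
      exact ⟨m, hm, Or.inr hmem⟩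
  choose f hfn hfm using hf
  by_cases hB : ∃ N, {j | f j ≤ N}.Infinite
  · obtain ⟨N, hN⟩ := hB
    obtain ⟨ψ, hψmono, hψ⟩ := Filter.extraction_of_frequently_atTop
      (Nat.frequently_atTop_iff_infinite.2 hN)
    set C : Set M := K ∪ ⋃ m ∈ Finset.Icc n N, L m with hC
    have hCc : IsCompact C :=
      hK.union ((Finset.Icc n N).isCompact_biUnion fun m _ => hLc m)
    have hxC : ∀ j, x (ψ j) ∈ C := by
      intro j
      rcases hfm (ψ j) with h | h
      · exact Or.inl h
      · refine Or.inr ?_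
        simp only [mem_iUnion, exists_prop]
        exact ⟨f (ψ j), Finset.mem_Icc.2 ⟨hfn (ψ j), hψ j⟩, h⟩
    obtain ⟨a, haC, φ, hφ, hconv⟩ := hCc.isSeqCompact hxC
    refine ⟨a, ?_, ψ ∘ φ, hψmono.comp hφ, hconv⟩
    rcases haC with h | h
    · exact Or.inl h
    · simp only [mem_iUnion, exists_prop] at h
      obtain ⟨m, hm, hmem⟩ := h
      refine Or.inr ?_
      simp only [mem_iUnion, Set.mem_setOf_eq, exists_prop]
      exact ⟨m, (Finset.mem_Icc.1 hm).1, hmem⟩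
  · push_neg at hB
    have hftop : Tendsto f atTop atTop := by
      refine tendsto_atTop.2 fun N => ?_
      have h1 : {j | f j ≤ N}ᶜ ∈ Filter.cofinite :=
        (hB N).compl_mem_cofinite
      rw [Nat.cofinite_eq_atTop] at h1
      filter_upwards [h1] with j hj
      exact le_of_not_ge hj
    have hy : ∀ j, ∃ y ∈ K, dist (x j) y < 1 / (f j + 1 : ℝ) := by
      intro j
      rcases hfm j with h | h
      · exact ⟨x j, h, by
          rw [dist_self]; positivity⟩
      · exact (Metric.infDist_lt_iff hKne).1 (hLd (f j) _ h)
    choose y hyK hyd using hy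
    obtain ⟨a, haK, φ, hφ, hconv⟩ := hK.isSeqCompact hyK
    refine ⟨a, Or.inl haK, φ, hφ, ?_⟩
    have hd1 : Tendsto (fun j => dist (x (φ j)) (y (φ j))) atTop (𝓝 0) := by
      have hlim : Tendsto (fun j => 1 / ((f (φ j) : ℝ) + 1)) atTop (𝓝 0) :=
        tendsto_one_div_add_atTop_nhds_zero_nat.comp (hftop.comp hφ.tendsto_atTop)
      refine squeeze_zero (fun j => dist_nonneg) (fun j => (hyd (φ j)).le) hlim
    have hd2 : Tendsto (fun j => dist (y (φ j)) a) atTop (𝓝 0) :=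
      tendsto_iff_dist_tendsto_zero.1 hconv
    rw [tendsto_iff_dist_tendsto_zero]
    have hsum : Tendsto (fun j => dist (x (φ j)) (y (φ j)) + dist (y (φ j)) a)
        atTop (𝓝 0) := by
      simpa using hd1.add hd2
    exact squeeze_zero (fun j => dist_nonneg) (fun j => dist_triangle _ _ _) hsum

/-- If `⋂_{n≥1} ⋃ {F_L : K ⊆ L ⊆ U_n(K)} ⊆ V` with `V` open, then there is an open `U ⊇ K`
such that `F_L ⊆ V` for every compact `L ⊆ U`. -/
theorem regularization_open_neighborhood (M X : Type*) [MetricSpace M] [MetricSpace X]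
    (F : Set M → Set X)
    (hFcomp : ∀ K : Set M, IsCompact K → IsCompact (F K))
    (hFmono : ∀ K L : Set M, IsCompact K → IsCompact L → K ⊆ L → F K ⊆ F L) :
    ∀ K : Set M, IsCompact K → ∀ V : Set X, IsOpen V →
      (⋂ n ∈ {n : ℕ | 1 ≤ n}, ⋃ L ∈ {L : Set M | IsCompact L ∧ K ⊆ L ∧
        ∀ t ∈ L, Metric.infDist t K < 1 / (n : ℝ)}, F L) ⊆ V →
      ∃ U : Set M, IsOpen U ∧ K ⊆ U ∧
        ∀ L : Set M, IsCompact L → L ⊆ U → F L ⊆ V := by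
  intro K hK V hV hsub
  by_cases hKne : K.Nonempty
  swap
  · -- K = ∅ : every compact L is admissible for every n
    rw [Set.not_nonempty_iff_eq_empty] at hKne
    subst hKne
    refine ⟨Set.univ, isOpen_univ, Set.subset_univ _, fun L hL _ z hz => ?_⟩
    apply hsub
    rw [Set.mem_iInter₂]
    intro n hn
    rw [Set.mem_iUnion₂]
    refine ⟨L, ⟨hL, Set.empty_subset L, fun t _ => ?_⟩, hz⟩
    rw [Metric.infDist_empty]
    have hn' : (1 : ℝ) ≤ (n : ℝ) := by exact_mod_cast hn
    positivity
  -- main case : K nonempty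
  have key : ∃ n : ℕ, 1 ≤ n ∧ ∀ L : Set M, IsCompact L → K ⊆ L →
      (∀ t ∈ L, Metric.infDist t K < 1 / (n : ℝ)) → F L ⊆ V := by
    by_contra hcon
    push_neg at hcon
    have h1 : ∀ m : ℕ, ∃ L : Set M, IsCompact L ∧ K ⊆ L ∧
        (∀ t ∈ L, Metric.infDist t K < 1 / (m + 1 : ℝ)) ∧ ∃ x ∈ F L, x ∉ V := by
      intro m
      obtain ⟨L, hLc, hLK, hLd, hLV⟩ := hcon (m + 1) (Nat.succ_le_succ (Nat.zero_le m))
      refine ⟨L, hLc, hLK, by exact_mod_cast hLd, Set.not_subset.1 hLV⟩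
    choose L hLc hLK hLd x hxF hxV using h1
    set S : ℕ → Set M := fun n => K ∪ ⋃ m ∈ {m : ℕ | n ≤ m}, L m with hS
    have hSc : ∀ n, IsCompact (S n) :=
      fun n => regularization_aux_union_compact K hK hKne L hLc hLd n
    have hSK : ∀ n, K ⊆ S n := fun n => Set.subset_union_left
    have hLS : ∀ n m, n ≤ m → L m ⊆ S n := by
      intro n m hnm t ht
      refine Or.inr ?_
      simp only [mem_iUnion, Set.mem_setOf_eq, exists_prop]
      exact ⟨m, hnm, ht⟩
    have hSd : ∀ n, ∀ t ∈ S n, Metric.infDist t K < 1 / (n + 1 : ℝ) := by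
      intro n t ht
      rcases ht with h | h
      · rw [Metric.infDist_zero_of_mem h]; positivity
      · simp only [mem_iUnion, Set.mem_setOf_eq, exists_prop] at h
        obtain ⟨m, hm, hmem⟩ := h
        calc Metric.infDist t K < 1 / (m + 1 : ℝ) := hLd m t hmem
          _ ≤ 1 / (n + 1 : ℝ) := by
            apply one_div_le_one_div_of_le
            · positivity
            · exact_mod_cast Nat.succ_le_succ hm
    have hSmono : ∀ n, S (n + 1) ⊆ S n := by
      intro n t ht
      rcases ht with h | h
      · exact Or.inl h
      · simp only [mem_iUnion, Set.mem_setOf_eq, exists_prop] at h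
        obtain ⟨m, hm, hmem⟩ := h
        exact hLS n m (le_trans (Nat.le_succ n) hm) hmem
    set A : ℕ → Set X := fun n => F (S n) ∩ Vᶜ with hA
    have hAc : ∀ n, IsCompact (A n) :=
      fun n => (hFcomp _ (hSc n)).inter_right hV.isClosed_compl
    have hAne : ∀ n, (A n).Nonempty := by
      intro n
      exact ⟨x n, hFmono (L n) (S n) (hLc n) (hSc n) (hLS n n le_rfl) (hxF n), hxV n⟩
    have hAdec : ∀ n, A (n + 1) ⊆ A n := by
      intro n
      exact Set.inter_subset_inter_left _
        (hFmono (S (n + 1)) (S n) (hSc (n + 1)) (hSc n) (hSmono n))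
    obtain ⟨z, hz⟩ := IsCompact.nonempty_iInter_of_sequence_nonempty_isCompact_isClosed
      A hAdec hAne (hAc 0) (fun n => (hAc n).isClosed)
    rw [Set.mem_iInter] at hz
    have hzV : z ∈ V := by
      apply hsub
      rw [Set.mem_iInter₂]
      intro n hn
      rw [Set.mem_iUnion₂]
      refine ⟨S n, ⟨hSc n, hSK n, fun t ht => ?_⟩, (hz n).1⟩
      calc Metric.infDist t K < 1 / (n + 1 : ℝ) := hSd n t ht
        _ ≤ 1 / (n : ℝ) := by
          apply one_div_le_one_div_of_le
          · exact_mod_cast Nat.lt_of_lt_of_le Nat.zero_lt_one hn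
          · linarith
    exact (hz 0).2 hzV
  obtain ⟨n, hn1, hkey⟩ := key
  refine ⟨{t | Metric.infDist t K < 1 / (n : ℝ)}, ?_, ?_, ?_⟩
  · exact isOpen_lt (Metric.continuous_infDist_pt K) continuous_const
  · intro t ht
    simp only [Set.mem_setOf_eq, Metric.infDist_zero_of_mem ht]
    have hn' : (1 : ℝ) ≤ (n : ℝ) := by exact_mod_cast hn1
    positivity
  · intro L hL hLU
    refine (hFmono L (K ∪ L) hL (hK.union hL) Set.subset_union_right).trans ?_
    refine hkey (K ∪ L) (hK.union hL) Set.subset_union_left ?_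
    intro t ht
    rcases ht with h | h
    · rw [Metric.infDist_zero_of_mem h]
      have hn' : (1 : ℝ) ≤ (n : ℝ) := by exact_mod_cast hn1
      positivity
    · exact hLU h
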